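/- Let f be the solution of the modified Boltzmann system (f'_t(0) = (1/2)∑_{ε≥1}f_t(ε)², f'_t(ε) = -f_t(ε)² for odd ε, f'_t(ε) = (1/2)f_t(ε/2)² - f_t(ε)² for even ε ≥ 2) with probability initial datum m of finite energy e = ∑ ε m(ε). Then the energy is conserved: ∑_{ε≥1} ε f_t(ε) = e for all t ≥ 0. -/

import Mathlib

/-- Right-hand side of the modified discrete Boltzmann system. -/
noncomputable def mbRHS (g : ℕ → ℝ) (ε : ℕ) : ℝ :=
  if ε = 0 then (1 / 2) * ∑' n : ℕ, (g (n + 1)) ^ 2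
  else if Odd ε then -(g ε) ^ 2
  else (1 / 2) * (g (ε / 2)) ^ 2 - (g ε) ^ 2

/-- `f` solves the modified Boltzmann system on `[0, ∞)`. -/
def SolvesMBE (f : ℝ → ℕ → ℝ) : Prop :=
  ∀ t : ℝ, 0 ≤ t → ∀ ε : ℕ, HasDerivAt (fun s => f s ε) (mbRHS (f t) ε) t

open Set Filter

lemma aux_monoOn (φ d : ℝ → ℝ)
    (hd : ∀ t, 0 ≤ t → HasDerivAt φ (d t) t)
    (h0 : ∀ t, 0 < t → 0 ≤ d t) : MonotoneOn φ (Set.Ici 0) := by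
  apply monotoneOn_of_deriv_nonneg (convex_Ici 0)
  · exact fun t ht => ((hd t ht).continuousAt).continuousWithinAt
  · intro t ht
    rw [interior_Ici] at ht
    exact ((hd t (le_of_lt ht)).differentiableAt).differentiableWithinAt
  · intro t ht
    rw [interior_Ici] at ht
    rw [(hd t (le_of_lt ht)).deriv]
    exact h0 t ht

lemma aux_nonneg (φ d : ℝ → ℝ)
    (hd : ∀ t, 0 ≤ t → HasDerivAt φ (d t) t)
    (hge : ∀ t, 0 ≤ t → -(φ t)^2 ≤ d t) (h0 : 0 ≤ φ 0) :
    ∀ t, 0 ≤ t → 0 ≤ φ t := by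
  have hca : ∀ t, 0 ≤ t → ContinuousAt φ t := fun t ht => (hd t ht).continuousAt
  set ψ : ℝ → ℝ := fun t => φ (max t 0) with hψ
  have hψc : Continuous ψ := by
    rw [continuous_iff_continuousAt]
    intro x
    have hmaxc : ContinuousAt (fun t : ℝ => max t 0) x :=
      (continuous_id.max continuous_const).continuousAt
    exact ContinuousAt.comp (x := x) (g := φ) (f := fun t : ℝ => max t 0)
      (hca _ (le_max_right x 0)) hmaxc
  set F : ℝ → ℝ := fun t => ∫ s in (0:ℝ)..t, ψ s with hF
  have hFd : ∀ t, HasDerivAt F (ψ t) t := by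
    intro t
    exact intervalIntegral.integral_hasDerivAt_right (hψc.intervalIntegrable 0 t)
      (hψc.stronglyMeasurableAtFilter _ _) hψc.continuousAt
  set G : ℝ → ℝ := fun t => φ t * Real.exp (F t) with hG
  have hGd : ∀ t, 0 ≤ t → HasDerivAt G ((d t + (φ t)^2) * Real.exp (F t)) t := by
    intro t ht
    have h1 : HasDerivAt (fun u => Real.exp (F u)) (Real.exp (F t) * ψ t) t := (hFd t).exp
    have h2 := (hd t ht).fun_mul h1
    have hmt : max t 0 = t := max_eq_left ht
    refine h2.congr_deriv ?_
    show d t * Real.exp (F t) + φ t * (Real.exp (F t) * φ (max t 0)) = (d t + φ t ^ 2) * Real.exp (F t)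
    rw [hmt]
    ring
  have hmono : MonotoneOn G (Set.Ici 0) := by
    apply aux_monoOn G (fun t => (d t + (φ t)^2) * Real.exp (F t)) hGd
    intro t ht
    have := hge t (le_of_lt ht)
    have := Real.exp_pos (F t)
    nlinarith
  intro t ht
  have h1 : G 0 ≤ G t := hmono (le_refl (0:ℝ)) ht ht
  have h2 : G 0 = φ 0 := by
    simp only [hG, hF, intervalIntegral.integral_same, Real.exp_zero, mul_one]
  have h3 : 0 < Real.exp (F t) := Real.exp_pos _
  have h4 : 0 ≤ φ t * Real.exp (F t) := by
    rw [h2] at h1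
    simp only [hG] at h1
    linarith
  exact (mul_nonneg_iff_of_pos_right h3).mp h4

lemma aux_sum_rhs (g : ℕ → ℝ) (n : ℕ) :
    ∑ ε ∈ Finset.range n, (ε : ℝ) * mbRHS g ε
      = ∑ k ∈ Finset.range ((n + 1) / 2), (k : ℝ) * (g k) ^ 2
        - ∑ ε ∈ Finset.range n, (ε : ℝ) * (g ε) ^ 2 := by
  induction n with
  | zero => simp
  | succ n ih =>
    rw [Finset.sum_range_succ, ih,
      Finset.sum_range_succ (f := fun ε : ℕ => (ε : ℝ) * (g ε) ^ 2)]
    rcases Nat.even_or_odd n with he | ho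
    · obtain ⟨m, hm⟩ := he
      rcases Nat.eq_zero_or_pos n with h0 | hpos
      · subst h0; norm_num
      · have h1 : (n + 1 + 1) / 2 = (n + 1) / 2 + 1 := by omega
        have h2 : (n + 1) / 2 = n / 2 := by omega
        have h3 : n / 2 = m := by omega
        rw [h1, h2, Finset.sum_range_succ, h3]
        have hrhs : mbRHS g n = (1 / 2) * (g (n / 2)) ^ 2 - (g n) ^ 2 := by
          unfold mbRHS
          rw [if_neg (by omega), if_neg (by simp [Nat.odd_iff]; omega)]
        rw [hrhs, h3]
        have hcast : (n : ℝ) = 2 * (m : ℝ) := by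
          have : n = 2 * m := by omega
          rw [this]; push_cast; ring
        rw [hcast]; ring
    · have h1 : (n + 1 + 1) / 2 = (n + 1) / 2 := by
        obtain ⟨m, hm⟩ := ho; omega
      have hrhs : mbRHS g n = -(g n) ^ 2 := by
        unfold mbRHS
        rw [if_neg (by rintro rfl; simp at ho), if_pos ho]
      rw [h1, hrhs]; ring

/-- Energy conservation for the modified Boltzmann system with a probability
initial datum of finite energy `e`: `∑ ε ε·f t ε = e` for all `t ≥ 0`. -/
theorem mbe_energy_conservation (f : ℝ → ℕ → ℝ) (e : ℝ)
    (hf : SolvesMBE f)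
    (hpos0 : ∀ ε : ℕ, 0 ≤ f 0 ε)
    (hprob0 : ∑' ε : ℕ, f 0 ε = 1)
    (hsum0 : Summable (fun ε : ℕ => (ε : ℝ) * f 0 ε))
    (he : ∑' ε : ℕ, (ε : ℝ) * f 0 ε = e) :
    ∀ t : ℝ, 0 ≤ t → ∑' ε : ℕ, (ε : ℝ) * f t ε = e := by
  intro t ht
  have he0 : 0 ≤ e := by
    rw [← he]
    exact tsum_nonneg fun ε => mul_nonneg (Nat.cast_nonneg ε) (hpos0 ε)
  -- Step 1: nonnegativity of f s ε for all s ≥ 0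
  have hpos : ∀ s, 0 ≤ s → ∀ ε, 0 ≤ f s ε := by
    intro s hs ε
    refine aux_nonneg (fun u => f u ε) (fun u => mbRHS (f u) ε)
      (fun u hu => hf u hu ε) ?_ (hpos0 ε) s hs
    intro u hu
    unfold mbRHS
    split_ifs with h1 h2
    · have h3 : (0:ℝ) ≤ ∑' n : ℕ, (f u (n+1))^2 := tsum_nonneg fun n => sq_nonneg _
      have h4 := sq_nonneg (f u ε)
      linarith
    · exact le_refl _
    · nlinarith [sq_nonneg (f u (ε/2))]
  -- derivative of partial energies
  have hPd : ∀ (n : ℕ) (u : ℝ), 0 ≤ u →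
      HasDerivAt (fun v => ∑ ε ∈ Finset.range n, (ε : ℝ) * f v ε)
        (∑ ε ∈ Finset.range n, (ε : ℝ) * mbRHS (f u) ε) u := by
    intro n u hu
    exact HasDerivAt.fun_sum fun ε _ => (hf u hu ε).const_mul ((ε : ℝ))
  -- the derivative as minus a tail sum
  have hDeq : ∀ (g : ℕ → ℝ) (n : ℕ),
      ∑ ε ∈ Finset.range n, (ε : ℝ) * mbRHS g ε
        = -∑ ε ∈ Finset.Ico ((n + 1) / 2) n, (ε : ℝ) * (g ε) ^ 2 := by
    intro g n
    have h2 : (n + 1) / 2 ≤ n := by omega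
    rw [aux_sum_rhs, Finset.sum_Ico_eq_sub _ h2]
    ring
  have hDle : ∀ (g : ℕ → ℝ) (n : ℕ), ∑ ε ∈ Finset.range n, (ε : ℝ) * mbRHS g ε ≤ 0 := by
    intro g n
    rw [hDeq]
    simp only [neg_nonpos]
    exact Finset.sum_nonneg fun ε _ => mul_nonneg (Nat.cast_nonneg ε) (sq_nonneg _)
  -- partial energies are nonincreasing in time
  have hPanti : ∀ (n : ℕ) (s : ℝ), 0 ≤ s → ∀ u, s ≤ u →
      ∑ ε ∈ Finset.range n, (ε : ℝ) * f u ε ≤ ∑ ε ∈ Finset.range n, (ε : ℝ) * f s ε := by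
    intro n s hs u hsu
    have hu : (0:ℝ) ≤ u := le_trans hs hsu
    have hmono := aux_monoOn (fun v => -∑ ε ∈ Finset.range n, (ε : ℝ) * f v ε)
      (fun v => -∑ ε ∈ Finset.range n, (ε : ℝ) * mbRHS (f v) ε)
      (fun v hv => (hPd n v hv).neg)
      (fun v _ => neg_nonneg.mpr (hDle (f v) n))
    have := hmono (show s ∈ Set.Ici (0:ℝ) from hs) (show u ∈ Set.Ici (0:ℝ) from hu) hsu
    simpa using this
  -- partial energies bounded by e
  have hPle : ∀ (n : ℕ) (s : ℝ), 0 ≤ s →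
      ∑ ε ∈ Finset.range n, (ε : ℝ) * f s ε ≤ e := by
    intro n s hs
    have h1 := hPanti n 0 (le_refl 0) s hs
    have h2 : ∑ ε ∈ Finset.range n, (ε : ℝ) * f 0 ε ≤ ∑' ε : ℕ, (ε : ℝ) * f 0 ε :=
      Summable.sum_le_tsum (Finset.range n)
        (fun ε _ => mul_nonneg (Nat.cast_nonneg ε) (hpos0 ε)) hsum0
    rw [he] at h2
    linarith
  -- individual energy bound
  have hfle : ∀ (s : ℝ), 0 ≤ s → ∀ ε : ℕ, (ε : ℝ) * f s ε ≤ e := by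
    intro s hs ε
    have h1 : (ε : ℝ) * f s ε ≤ ∑ i ∈ Finset.range (ε + 1), (i : ℝ) * f s i :=
      Finset.single_le_sum (fun i _ => mul_nonneg (Nat.cast_nonneg i) (hpos s hs i))
        (Finset.self_mem_range_succ ε)
    exact le_trans h1 (hPle (ε + 1) s hs)
  -- lower bound on the derivative
  have hDge : ∀ (n : ℕ), 2 ≤ n → ∀ (s : ℝ), 0 ≤ s →
      -(e ^ 2 / ((((n + 1) / 2 : ℕ)) : ℝ)) ≤ ∑ ε ∈ Finset.range n, (ε : ℝ) * mbRHS (f s) ε := by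
    intro n hn s hs
    have hM1 : 1 ≤ (n + 1) / 2 := by omega
    have hMr : (0:ℝ) < (((n + 1) / 2 : ℕ) : ℝ) := by
      exact_mod_cast Nat.lt_of_lt_of_le Nat.zero_lt_one hM1
    rw [hDeq, neg_le_neg_iff]
    have hstep : ∀ ε ∈ Finset.Ico ((n + 1) / 2) n,
        (ε : ℝ) * (f s ε) ^ 2
          ≤ (e / (((n + 1) / 2 : ℕ) : ℝ)) * ((ε : ℝ) * f s ε) := by
      intro ε hε
      rw [Finset.mem_Ico] at hε
      have hfs : 0 ≤ f s ε := hpos s hs ε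
      have hMε : (((n + 1) / 2 : ℕ) : ℝ) ≤ (ε : ℝ) := by exact_mod_cast hε.1
      have hfu : f s ε ≤ e / (((n + 1) / 2 : ℕ) : ℝ) := by
        rw [le_div_iff₀ hMr]
        calc f s ε * (((n + 1) / 2 : ℕ) : ℝ) ≤ f s ε * (ε : ℝ) :=
              mul_le_mul_of_nonneg_left hMε hfs
          _ = (ε : ℝ) * f s ε := by ring
          _ ≤ e := hfle s hs ε
      calc (ε : ℝ) * (f s ε) ^ 2 = ((ε : ℝ) * f s ε) * f s ε := by ring
        _ ≤ ((ε : ℝ) * f s ε) * (e / (((n + 1) / 2 : ℕ) : ℝ)) :=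
            mul_le_mul_of_nonneg_left hfu (mul_nonneg (Nat.cast_nonneg ε) hfs)
        _ = (e / (((n + 1) / 2 : ℕ) : ℝ)) * ((ε : ℝ) * f s ε) := by ring
    calc ∑ ε ∈ Finset.Ico ((n + 1) / 2) n, (ε : ℝ) * (f s ε) ^ 2
        ≤ ∑ ε ∈ Finset.Ico ((n + 1) / 2) n,
            (e / (((n + 1) / 2 : ℕ) : ℝ)) * ((ε : ℝ) * f s ε) := Finset.sum_le_sum hstep
      _ = (e / (((n + 1) / 2 : ℕ) : ℝ)) *
            ∑ ε ∈ Finset.Ico ((n + 1) / 2) n, (ε : ℝ) * f s ε := by rw [Finset.mul_sum]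
      _ ≤ (e / (((n + 1) / 2 : ℕ) : ℝ)) * e := by
          apply mul_le_mul_of_nonneg_left _ (div_nonneg he0 (le_of_lt hMr))
          have hsub : Finset.Ico ((n + 1) / 2) n ⊆ Finset.range n := by
            intro x hx
            rw [Finset.mem_Ico] at hx
            exact Finset.mem_range.mpr hx.2
          have h1 : ∑ ε ∈ Finset.Ico ((n + 1) / 2) n, (ε : ℝ) * f s ε
              ≤ ∑ ε ∈ Finset.range n, (ε : ℝ) * f s ε :=
            Finset.sum_le_sum_of_subset_of_nonneg hsub
              (fun i _ _ => mul_nonneg (Nat.cast_nonneg i) (hpos s hs i))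
          exact le_trans h1 (hPle n s hs)
      _ = e ^ 2 / (((n + 1) / 2 : ℕ) : ℝ) := by ring
  -- lower bound on partial energies at time t
  have hlow : ∀ (n : ℕ), 2 ≤ n →
      ∑ ε ∈ Finset.range n, (ε : ℝ) * f 0 ε - t * (e ^ 2 / ((((n + 1) / 2 : ℕ)) : ℝ))
        ≤ ∑ ε ∈ Finset.range n, (ε : ℝ) * f t ε := by
    intro n hn
    set c : ℝ := e ^ 2 / ((((n + 1) / 2 : ℕ)) : ℝ) with hc
    have hmono := aux_monoOn
      (fun v => (∑ ε ∈ Finset.range n, (ε : ℝ) * f v ε) + v * c)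
      (fun v => (∑ ε ∈ Finset.range n, (ε : ℝ) * mbRHS (f v) ε) + c)
      (fun v hv => (hPd n v hv).add (hasDerivAt_mul_const c))
      (fun v hv => by
        have := hDge n hn v (le_of_lt hv)
        rw [← hc] at this
        show 0 ≤ (∑ ε ∈ Finset.range n, (ε : ℝ) * mbRHS (f v) ε) + c
        linarith)
    have := hmono Set.self_mem_Ici (show t ∈ Set.Ici (0:ℝ) from ht) ht
    simp only [zero_mul, add_zero] at this
    linarith
  -- limit passage
  have hsummt : Summable (fun ε : ℕ => (ε : ℝ) * f t ε) :=
    summable_of_sum_range_le (fun ε => mul_nonneg (Nat.cast_nonneg ε) (hpos t ht ε))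
      (fun n => hPle n t ht)
  have htend : Tendsto (fun n => ∑ ε ∈ Finset.range n, (ε : ℝ) * f t ε) atTop
      (nhds (∑' ε : ℕ, (ε : ℝ) * f t ε)) := hsummt.hasSum.tendsto_sum_nat
  have htend0 : Tendsto (fun n => ∑ ε ∈ Finset.range n, (ε : ℝ) * f 0 ε) atTop (nhds e) := by
    have := hsum0.hasSum.tendsto_sum_nat
    rwa [he] at this
  have hMt : Tendsto (fun n : ℕ => ((((n + 1) / 2 : ℕ)) : ℝ)) atTop atTop :=
    tendsto_natCast_atTop_atTop.comp
      (tendsto_atTop_atTop.mpr fun b => ⟨2 * b + 2, fun n hn => by omega⟩)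
  have hc0 : Tendsto (fun n : ℕ => t * (e ^ 2 / ((((n + 1) / 2 : ℕ)) : ℝ))) atTop (nhds 0) := by
    have h1 : Tendsto (fun n : ℕ => e ^ 2 / ((((n + 1) / 2 : ℕ)) : ℝ)) atTop (nhds 0) :=
      Tendsto.div_atTop tendsto_const_nhds hMt
    have h2 := h1.const_mul t
    simpa using h2
  have hlowlim : Tendsto
      (fun n : ℕ => ∑ ε ∈ Finset.range n, (ε : ℝ) * f 0 ε
        - t * (e ^ 2 / ((((n + 1) / 2 : ℕ)) : ℝ))) atTop (nhds (e - 0)) := htend0.sub hc0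
  have hle1 : e - 0 ≤ ∑' ε : ℕ, (ε : ℝ) * f t ε := by
    refine le_of_tendsto_of_tendsto hlowlim htend ?_
    filter_upwards [eventually_ge_atTop 2] with n hn
    exact hlow n hn
  have hle2 : ∑' ε : ℕ, (ε : ℝ) * f t ε ≤ e :=
    Summable.tsum_le_of_sum_range_le hsummt (fun n => hPle n t ht)
  linarith
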